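/- Let n ≥ 3 and consider the root system of type A_{n−1}: Φ = {ε_i−ε_j : 1 ≤ i ≠ j ≤ n} in ℝⁿ with the standard inner product B (so B(α,α) = 2 and α∨ = α for every root), Weyl group S_n, with all parameters equal to 1. Then Ω′_{S_n} = (1/16)·Σ_{α,β>0, B(α,β)≠0} B(α∨,β∨)⁻¹·[s_α,s_β]² = (1/8)(e_{(123)} − n(n−1)(n−2)/3) in ℂ[S_n], where [s_α,s_β] = s_α s_β − s_β s_α, e_{(123)} is the sum of all 3-cycles, and n(n−1)(n−2)/3 is the number of 3-cycles in S_n. -/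

import Mathlib

noncomputable section

open scoped Classical

section Statement15

variable (n : ℕ)

/-- The positive roots of type `A_{n-1}`: the roots `ε_i − ε_j`, `i < j`, encoded by the
pair `(i,j)`. -/
def posRootsA : Finset (Fin n × Fin n) := Finset.univ.filter fun p => p.1 < p.2

/-- The root `ε_i − ε_j` as a vector of `ℝⁿ` (note `B(α,α) = 2` and `α∨ = α`). -/
def rootVecA (p : Fin n × Fin n) : Fin n → ℝ := Pi.single p.1 1 - Pi.single p.2 1

/-- The standard inner product of `ℝⁿ`. -/
def dotR (x y : Fin n → ℝ) : ℝ := ∑ i, x i * y i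

/-- The sum of all `3`-cycles in `ℂ[S_n]`. -/
def threeCycleSum : MonoidAlgebra ℂ (Equiv.Perm (Fin n)) :=
  ∑ σ ∈ Finset.univ.filter fun σ : Equiv.Perm (Fin n) => σ.IsThreeCycle,
    MonoidAlgebra.single σ (1 : ℂ)

/-- The commutator `[s_α, s_β] = s_α s_β − s_β s_α` in `ℂ[S_n]`, for the reflections
(transpositions) attached to the positive roots `p, q`. -/
def commSn (p q : Fin n × Fin n) : MonoidAlgebra ℂ (Equiv.Perm (Fin n)) :=
  MonoidAlgebra.single (Equiv.swap p.1 p.2 * Equiv.swap q.1 q.2) (1 : ℂ)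
    - MonoidAlgebra.single (Equiv.swap q.1 q.2 * Equiv.swap p.1 p.2) (1 : ℂ)

/-- `Ω′_{S_n} = (1/16) Σ_{α,β>0, B(α,β)≠0} B(α∨,β∨)⁻¹ [s_α,s_β]²`, summed over ordered
pairs of non-orthogonal positive roots, with all parameters equal to `1`. -/
def OmegaSnPrime : MonoidAlgebra ℂ (Equiv.Perm (Fin n)) :=
  (1 / 16 : ℂ) • ∑ p ∈ posRootsA n, ∑ q ∈ posRootsA n,
    if dotR n (rootVecA n p) (rootVecA n q) ≠ 0 then
      (((dotR n (rootVecA n p) (rootVecA n q))⁻¹ : ℝ) : ℂ) • (commSn n p q) ^ 2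
    else 0

namespace Stmt15Aux
open Finset Equiv Equiv.Perm

variable (n : ℕ)

lemma dot_formula (p q : Fin n × Fin n) :
    dotR n (rootVecA n p) (rootVecA n q) =
      (if q.1 = p.1 then 1 else 0) - (if q.2 = p.1 then 1 else 0)
        - (if q.1 = p.2 then 1 else 0) + (if q.2 = p.2 then 1 else 0) := by
  simp only [dotR, rootVecA, Pi.sub_apply, Pi.single_apply, sub_mul, mul_sub,
    Finset.sum_sub_distrib, ite_mul, mul_ite, one_mul, mul_one, zero_mul, mul_zero,
    Finset.sum_ite_eq', Finset.mem_univ, if_true]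
  ring

def D : Finset (Fin n × Fin n × Fin n) :=
  Finset.univ.filter fun t => t.1 ≠ t.2.1 ∧ t.1 ≠ t.2.2 ∧ t.2.1 ≠ t.2.2

def T : Finset (Equiv.Perm (Fin n)) :=
  Finset.univ.filter fun σ : Equiv.Perm (Fin n) => σ.IsThreeCycle

def g (t : Fin n × Fin n × Fin n) : Equiv.Perm (Fin n) :=
  Equiv.swap t.1 t.2.1 * Equiv.swap t.2.1 t.2.2

def sgn (t : Fin n × Fin n × Fin n) : ℂ :=
  -((if t.1 < t.2.1 then 1 else -1) * (if t.2.1 < t.2.2 then 1 else -1))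

def X (σ : Equiv.Perm (Fin n)) : MonoidAlgebra ℂ (Equiv.Perm (Fin n)) :=
  MonoidAlgebra.single σ 1 + MonoidAlgebra.single σ⁻¹ 1 - 2

def F (t : Fin n × Fin n × Fin n) : MonoidAlgebra ℂ (Equiv.Perm (Fin n)) :=
  sgn n t • X n (g n t)

variable {n}

lemma cube {σ : Equiv.Perm (Fin n)} (h : σ.IsThreeCycle) : σ ^ 3 = 1 := by
  rw [← h.orderOf]; exact pow_orderOf_eq_one σ

lemma sq_single {σ : Equiv.Perm (Fin n)} (h : σ.IsThreeCycle) :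
    (MonoidAlgebra.single σ (1 : ℂ) - MonoidAlgebra.single σ⁻¹ (1 : ℂ)) ^ 2 = X n σ := by
  have h3 := cube h
  have h2 : σ * σ = σ⁻¹ := by
    apply eq_inv_of_mul_eq_one_left
    have : σ * σ * σ = σ ^ 3 := by rw [pow_succ, pow_two]
    rw [this, h3]
  have h2' : σ⁻¹ * σ⁻¹ = σ := by
    rw [← mul_inv_rev, h2, inv_inv]
  rw [sq, sub_mul, mul_sub, mul_sub]
  simp only [MonoidAlgebra.single_mul_single, one_mul, h2, h2', mul_inv_cancel, inv_mul_cancel]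
  rw [X, ← MonoidAlgebra.one_def]
  have h21 : (2 : MonoidAlgebra ℂ (Equiv.Perm (Fin n))) = 1 + 1 := by norm_num
  rw [h21]
  abel

lemma g_isThreeCycle {t : Fin n × Fin n × Fin n} (ht : t ∈ D n) : (g n t).IsThreeCycle := by
  obtain ⟨x, y, z⟩ := t
  simp only [D, Finset.mem_filter, Finset.mem_univ, true_and] at ht
  obtain ⟨h1, h2, h3⟩ := ht
  rw [g, Equiv.swap_comm]
  exact Equiv.Perm.isThreeCycle_swap_mul_swap_same (Ne.symm h1) h3 (by simpa using h2)


section Cycle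
variable {σ : Equiv.Perm (Fin n)} {x : Fin n}

lemma distinct3 (h : σ.IsThreeCycle) (hx : σ x ≠ x) :
    σ x ≠ x ∧ σ (σ x) ≠ σ x ∧ σ (σ x) ≠ x ∧ σ (σ (σ x)) = x := by
  have h3 := cube h
  have hfix : σ (σ (σ x)) = x := by
    have : (σ ^ 3) x = x := by rw [h3]; rfl
    simpa [pow_succ, Equiv.Perm.mul_apply] using this
  refine ⟨hx, fun hc => hx (σ.injective hc), fun hc => hx ?_, hfix⟩
  have := congrArg σ hc
  rw [hfix] at this
  exact this.symm

lemma support_eq (h : σ.IsThreeCycle) (hx : σ x ≠ x) :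
    σ.support = {x, σ x, σ (σ x)} := by
  obtain ⟨d1, d2, d3, hfix⟩ := distinct3 h hx
  symm
  apply Finset.eq_of_subset_of_card_le
  · intro w hw
    simp only [Finset.mem_insert, Finset.mem_singleton] at hw
    rcases hw with rfl | rfl | rfl
    · exact Equiv.Perm.mem_support.2 hx
    · exact Equiv.Perm.mem_support.2 d2
    · exact Equiv.Perm.mem_support.2 (by rw [hfix]; exact Ne.symm d3)
  · rw [h.card_support]
    have c1 : ({x, σ x, σ (σ x)} : Finset (Fin n)).card = 3 := by
      rw [Finset.card_insert_of_notMem (by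
          simp only [Finset.mem_insert, Finset.mem_singleton]
          push_neg
          exact ⟨Ne.symm d1, Ne.symm d3⟩),
        Finset.card_insert_of_notMem (by simpa using Ne.symm d2), Finset.card_singleton]
    rw [c1]

lemma g_eq (h : σ.IsThreeCycle) (hx : σ x ≠ x) :
    g n (x, σ x, σ (σ x)) = σ := by
  obtain ⟨d1, d2, d3, hfix⟩ := distinct3 h hx
  have hsupp := support_eq h hx
  apply Equiv.ext
  intro w
  rw [g]
  simp only [Equiv.Perm.mul_apply]
  by_cases h1 : w = x
  · subst h1
    rw [Equiv.swap_apply_of_ne_of_ne (Ne.symm d1) (Ne.symm d3), Equiv.swap_apply_left]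
  by_cases h2 : w = σ x
  · subst h2
    rw [Equiv.swap_apply_left, Equiv.swap_apply_of_ne_of_ne d3 d2]
  by_cases h3 : w = σ (σ x)
  · subst h3
    rw [Equiv.swap_apply_right, Equiv.swap_apply_right, hfix]
  · rw [Equiv.swap_apply_of_ne_of_ne h2 h3, Equiv.swap_apply_of_ne_of_ne h1 h2]
    have hw : w ∉ σ.support := by
      rw [hsupp]
      simp [h1, h2, h3]
    exact (Equiv.Perm.notMem_support.mp hw).symm

lemma g_fst_eq {t : Fin n × Fin n × Fin n} (ht : t ∈ D n) :
    (g n t) t.1 = t.2.1 ∧ (g n t) t.2.1 = t.2.2 := by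
  obtain ⟨x, y, z⟩ := t
  simp only [D, Finset.mem_filter, Finset.mem_univ, true_and] at ht
  obtain ⟨h1, h2, h3⟩ := ht
  constructor
  · simp only [g, Equiv.Perm.mul_apply]
    rw [Equiv.swap_apply_of_ne_of_ne h1 h2, Equiv.swap_apply_left]
  · simp only [g, Equiv.Perm.mul_apply]
    rw [Equiv.swap_apply_left, Equiv.swap_apply_of_ne_of_ne (Ne.symm h2) (Ne.symm h3)]

lemma fiber_eq (h : σ.IsThreeCycle) (hx : σ x ≠ x) :
    (D n).filter (fun t => g n t = σ) =
      {(x, σ x, σ (σ x)), (σ x, σ (σ x), x), (σ (σ x), x, σ x)} := by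
  obtain ⟨d1, d2, d3, hfix⟩ := distinct3 h hx
  have hsupp := support_eq h hx
  ext t
  simp only [Finset.mem_filter, Finset.mem_insert, Finset.mem_singleton]
  constructor
  · rintro ⟨htD, hgt⟩
    obtain ⟨e1, e2⟩ := g_fst_eq htD
    rw [hgt] at e1 e2
    have hmem : t.1 ∈ σ.support := by
      rw [Equiv.Perm.mem_support, e1]
      simp only [D, Finset.mem_filter, Finset.mem_univ, true_and] at htD
      exact Ne.symm htD.1
    rw [hsupp] at hmem
    simp only [Finset.mem_insert, Finset.mem_singleton] at hmem
    have ht' : t = (t.1, σ t.1, σ (σ t.1)) := by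
      rw [e1, e2]
    rcases hmem with h' | h' | h'
    · left; rw [ht', h']
    · right; left; rw [ht', h']
      have : σ (σ (σ x)) = x := hfix
      rw [this]
    · right; right; rw [ht', h', hfix]
  · intro ht
    have key : ∀ w : Fin n, σ w ≠ w → t = (w, σ w, σ (σ w)) → t ∈ D n ∧ g n t = σ := by
      intro w hw hteq
      obtain ⟨e1, e2, e3, _⟩ := distinct3 h hw
      subst hteq
      refine ⟨?_, g_eq h hw⟩
      simp only [D, Finset.mem_filter, Finset.mem_univ, true_and]
      exact ⟨Ne.symm e1, Ne.symm e3, Ne.symm e2⟩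
    rcases ht with h' | h' | h'
    · exact key x hx h'
    · refine key (σ x) d2 ?_
      rw [h', hfix]
    · refine key (σ (σ x)) (by rw [hfix]; exact Ne.symm d3) ?_
      rw [h', hfix]

end Cycle

lemma sgn_sum {x y z : Fin n} (hxy : x ≠ y) (hxz : x ≠ z) (hyz : y ≠ z) :
    sgn n (x, y, z) + sgn n (y, z, x) + sgn n (z, x, y) = 1 := by
  rcases lt_or_gt_of_ne hxy with h1 | h1 <;>
  rcases lt_or_gt_of_ne hyz with h2 | h2 <;>
  rcases lt_or_gt_of_ne hxz with h3 | h3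
  all_goals
    first
      | exact absurd ((h1.trans h2).trans h3) (lt_irrefl x)
      | exact absurd (h3.trans (h2.trans h1)) (lt_irrefl x)
      | (simp [sgn, h1, h2, h3, asymm h1, asymm h2, asymm h3]; try norm_num)

lemma exists_moved {σ : Equiv.Perm (Fin n)} (h : σ.IsThreeCycle) : ∃ x, σ x ≠ x := by
  have := h.card_support
  have hne : σ.support.Nonempty := by
    rw [← Finset.card_pos, this]; norm_num
  obtain ⟨x, hx⟩ := hne
  exact ⟨x, Equiv.Perm.mem_support.mp hx⟩

lemma fiber_card {σ : Equiv.Perm (Fin n)} (h : σ.IsThreeCycle) :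
    ((D n).filter fun t => g n t = σ).card = 3 := by
  obtain ⟨x, hx⟩ := exists_moved h
  obtain ⟨d1, d2, d3, hfix⟩ := distinct3 h hx
  rw [fiber_eq h hx, Finset.card_eq_three]
  refine ⟨(x, σ x, σ (σ x)), (σ x, σ (σ x), x), (σ (σ x), x, σ x),
    fun hc => d1 (congrArg Prod.fst hc).symm,
    fun hc => d3 (congrArg Prod.fst hc).symm,
    fun hc => d2 (congrArg Prod.fst hc).symm, rfl⟩

lemma card_D_fiber {p : Fin n × Fin n} (hp : p.1 ≠ p.2) :
    ((D n).filter fun t => (t.1, t.2.1) = p).card = n - 2 := by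
  obtain ⟨a, b⟩ := p
  replace hp : a ≠ b := hp
  have hcard : ((Finset.univ : Finset (Fin n)) \ {a, b}).card = n - 2 := by
    rw [Finset.card_sdiff_of_subset (Finset.subset_univ _), Finset.card_univ, Fintype.card_fin,
      Finset.card_insert_of_notMem (by simpa using hp), Finset.card_singleton]
  rw [← hcard]
  apply Finset.card_nbij' (fun t => t.2.2) (fun z => (a, b, z))
  · intro t ht
    simp only [Finset.mem_coe, Finset.mem_filter, D, Finset.mem_univ, true_and, Prod.mk.injEq] at ht
    obtain ⟨⟨h1, h2, h3⟩, e1, e2⟩ := ht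
    simp only [Finset.mem_coe, Finset.mem_sdiff, Finset.mem_univ, true_and, Finset.mem_insert,
      Finset.mem_singleton]
    push_neg
    exact ⟨fun hc => h2 (by rw [e1, hc]), fun hc => h3 (by rw [e2, hc])⟩
  · intro z hz
    simp only [Finset.mem_coe, Finset.mem_sdiff, Finset.mem_univ, true_and, Finset.mem_insert,
      Finset.mem_singleton, not_or] at hz
    refine Finset.mem_filter.mpr ⟨?_, rfl⟩
    simp only [D, Finset.mem_filter, Finset.mem_univ, true_and]
    exact ⟨hp, fun hc => hz.1 hc.symm, fun hc => hz.2 hc.symm⟩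
  · intro t ht
    simp only [Finset.mem_coe, Finset.mem_filter, Prod.mk.injEq] at ht
    obtain ⟨-, e1, e2⟩ := ht
    rw [← e1, ← e2]
  · intro z hz
    rfl

lemma card_D : (D n).card = (n * n - n) * (n - 2) := by
  rw [Finset.card_eq_sum_card_fiberwise
    (f := fun t : Fin n × Fin n × Fin n => (t.1, t.2.1))
    (t := (Finset.univ : Finset (Fin n)).offDiag)]
  · rw [Finset.sum_congr rfl fun p hp => card_D_fiber (Finset.mem_offDiag.mp hp).2.2]
    rw [Finset.sum_const, Finset.offDiag_card, Finset.card_univ, Fintype.card_fin, smul_eq_mul]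
  · intro t ht
    simp only [Finset.mem_coe, D, Finset.mem_filter, Finset.mem_univ, true_and] at ht
    simp only [Finset.mem_coe, Finset.mem_offDiag, Finset.mem_univ, true_and]
    exact ht.1

lemma card_T : 3 * (T n).card = (n * n - n) * (n - 2) := by
  rw [← card_D]
  rw [Finset.card_eq_sum_card_fiberwise
    (f := g n) (t := T n) (fun t ht => by
      simp only [Finset.mem_coe, T, Finset.mem_filter, Finset.mem_univ, true_and]
      exact g_isThreeCycle ht)]
  rw [Finset.sum_congr rfl fun σ hσ =>
    fiber_card (by simpa [T] using hσ : σ.IsThreeCycle)]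
  rw [Finset.sum_const, smul_eq_mul, mul_comm]


section Bij

variable (n : ℕ)

def fTerm (pq : (Fin n × Fin n) × (Fin n × Fin n)) : MonoidAlgebra ℂ (Equiv.Perm (Fin n)) :=
  if dotR n (rootVecA n pq.1) (rootVecA n pq.2) ≠ 0 then
    (((dotR n (rootVecA n pq.1) (rootVecA n pq.2))⁻¹ : ℝ) : ℂ) • (commSn n pq.1 pq.2) ^ 2
  else 0

def A : Finset ((Fin n × Fin n) × (Fin n × Fin n)) :=
  ((posRootsA n) ×ˢ (posRootsA n)).filter fun pq =>
    pq.1 ≠ pq.2 ∧ dotR n (rootVecA n pq.1) (rootVecA n pq.2) ≠ 0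

def mkR (a b : Fin n) : Fin n × Fin n := if a < b then (a, b) else (b, a)

def iMap (pq : (Fin n × Fin n) × (Fin n × Fin n)) : Fin n × Fin n × Fin n :=
  if pq.2.1 = pq.1.1 then (pq.1.2, pq.1.1, pq.2.2)
  else if pq.2.2 = pq.1.1 then (pq.1.2, pq.1.1, pq.2.1)
  else if pq.2.1 = pq.1.2 then (pq.1.1, pq.1.2, pq.2.2)
  else (pq.1.1, pq.1.2, pq.2.1)

def jMap (t : Fin n × Fin n × Fin n) : (Fin n × Fin n) × (Fin n × Fin n) :=
  (mkR n t.1 t.2.1, mkR n t.2.1 t.2.2)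

variable {n}

lemma mkR_lt {a b : Fin n} (h : a < b) : mkR n a b = (a, b) := if_pos h

lemma mkR_gt {a b : Fin n} (h : b < a) : mkR n a b = (b, a) := if_neg (asymm h)

lemma mkR_mem {a b : Fin n} (h : a ≠ b) : mkR n a b ∈ posRootsA n := by
  rcases lt_or_gt_of_ne h with h' | h'
  · rw [mkR_lt h']; simp [posRootsA, h']
  · rw [mkR_gt h']; simp [posRootsA, h']

lemma swap_mkR (a b : Fin n) : Equiv.swap (mkR n a b).1 (mkR n a b).2 = Equiv.swap a b := by
  rw [mkR]; split_ifs <;> simp [Equiv.swap_comm]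

lemma A_spec {pq : (Fin n × Fin n) × (Fin n × Fin n)} (hmem : pq ∈ A n) :
    pq.1.1 < pq.1.2 ∧ pq.2.1 < pq.2.2 ∧
    ((pq.2.1 = pq.1.1 ∧ pq.2.2 ≠ pq.1.1 ∧ pq.2.1 ≠ pq.1.2 ∧ pq.2.2 ≠ pq.1.2) ∨
     (pq.2.1 ≠ pq.1.1 ∧ pq.2.2 = pq.1.1 ∧ pq.2.1 ≠ pq.1.2 ∧ pq.2.2 ≠ pq.1.2) ∨
     (pq.2.1 ≠ pq.1.1 ∧ pq.2.2 ≠ pq.1.1 ∧ pq.2.1 = pq.1.2 ∧ pq.2.2 ≠ pq.1.2) ∨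
     (pq.2.1 ≠ pq.1.1 ∧ pq.2.2 ≠ pq.1.1 ∧ pq.2.1 ≠ pq.1.2 ∧ pq.2.2 = pq.1.2)) := by
  obtain ⟨p, q⟩ := pq
  simp only [A, Finset.mem_filter, Finset.mem_product, posRootsA, Finset.mem_univ,
    true_and] at hmem
  obtain ⟨⟨hp, hq⟩, hne, hd⟩ := hmem
  refine ⟨hp, hq, ?_⟩
  rw [dot_formula] at hd
  by_cases c1 : q.1 = p.1
  · refine Or.inl ⟨c1, ?_, ?_, ?_⟩
    · exact ne_of_gt (c1 ▸ hq)
    · exact ne_of_lt (c1 ▸ hp)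
    · intro hc
      exact hne (Prod.ext c1.symm hc.symm)
  · by_cases c2 : q.2 = p.1
    · refine Or.inr (Or.inl ⟨c1, c2, ?_, ?_⟩)
      · exact ne_of_lt ((c2 ▸ hq).trans hp)
      · exact ne_of_lt (c2 ▸ hp)
    · by_cases c3 : q.1 = p.2
      · refine Or.inr (Or.inr (Or.inl ⟨c1, c2, c3, ?_⟩))
        · exact ne_of_gt (c3 ▸ hq)
      · by_cases c4 : q.2 = p.2
        · exact Or.inr (Or.inr (Or.inr ⟨c1, c2, c3, c4⟩))
        · exfalso
          apply hd
          simp [c1, c2, c3, c4]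


lemma commSq {p q : Fin n × Fin n} {t : Fin n × Fin n × Fin n} (ht : t ∈ D n)
    (h1 : Equiv.swap p.1 p.2 = Equiv.swap t.1 t.2.1)
    (h2 : Equiv.swap q.1 q.2 = Equiv.swap t.2.1 t.2.2) :
    (commSn n p q) ^ 2 = X n (g n t) := by
  have hc : commSn n p q
      = MonoidAlgebra.single (g n t) 1 - MonoidAlgebra.single (g n t)⁻¹ 1 := by
    rw [commSn, g, h1, h2, mul_inv_rev, Equiv.swap_inv, Equiv.swap_inv]
  rw [hc, sq_single (g_isThreeCycle ht)]

lemma iMap_mem {pq : (Fin n × Fin n) × (Fin n × Fin n)} (hmem : pq ∈ A n) :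
    iMap n pq ∈ D n := by
  obtain ⟨hp, hq, hc⟩ := A_spec hmem
  obtain ⟨p, q⟩ := pq
  simp only [D, Finset.mem_filter, Finset.mem_univ, true_and]
  rcases hc with ⟨e1, e2, e3, e4⟩ | ⟨e1, e2, e3, e4⟩ | ⟨e1, e2, e3, e4⟩ | ⟨e1, e2, e3, e4⟩
  · rw [iMap, if_pos e1]
    exact ⟨ne_of_gt hp, fun h => e4 h.symm, fun h => e2 h.symm⟩
  · rw [iMap, if_neg e1, if_pos e2]
    exact ⟨ne_of_gt hp, fun h => e3 h.symm, fun h => e1 h.symm⟩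
  · rw [iMap, if_neg e1, if_neg e2, if_pos e3]
    exact ⟨ne_of_lt hp, fun h => e2 h.symm, fun h => e4 h.symm⟩
  · rw [iMap, if_neg e1, if_neg e2, if_neg e3]
    exact ⟨ne_of_lt hp, fun h => e1 h.symm, fun h => e3 h.symm⟩

lemma jMap_mem {t : Fin n × Fin n × Fin n} (ht : t ∈ D n) : jMap n t ∈ A n := by
  obtain ⟨x, y, z⟩ := t
  simp only [D, Finset.mem_filter, Finset.mem_univ, true_and] at ht
  obtain ⟨h1, h2, h3⟩ := ht
  simp only [A, Finset.mem_filter, Finset.mem_product, jMap]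
  refine ⟨⟨mkR_mem h1, mkR_mem h3⟩, ?_, ?_⟩ <;>
    rcases lt_or_gt_of_ne h1 with o1 | o1 <;> rcases lt_or_gt_of_ne h3 with o2 | o2
  · rw [mkR_lt o1, mkR_lt o2]
    intro hc; exact h1 (congrArg Prod.fst hc)
  · rw [mkR_lt o1, mkR_gt o2]
    intro hc; exact h2 (congrArg Prod.fst hc)
  · rw [mkR_gt o1, mkR_lt o2]
    intro hc; exact h2 (congrArg Prod.snd hc)
  · rw [mkR_gt o1, mkR_gt o2]
    intro hc; exact h3 (congrArg Prod.fst hc)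
  · rw [mkR_lt o1, mkR_lt o2, dot_formula]
    simp [Ne.symm h1, Ne.symm h2, Ne.symm h3]
  · rw [mkR_lt o1, mkR_gt o2, dot_formula]
    simp [Ne.symm h1, Ne.symm h2, Ne.symm h3]
  · rw [mkR_gt o1, mkR_lt o2, dot_formula]
    simp [h1, h2, h3, Ne.symm h1, Ne.symm h2, Ne.symm h3]
  · rw [mkR_gt o1, mkR_gt o2, dot_formula]
    simp [h1, h2, h3, Ne.symm h1, Ne.symm h2, Ne.symm h3]


lemma left_inv {pq : (Fin n × Fin n) × (Fin n × Fin n)} (hmem : pq ∈ A n) :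
    jMap n (iMap n pq) = pq := by
  obtain ⟨hp, hq, hc⟩ := A_spec hmem
  obtain ⟨p, q⟩ := pq
  rcases hc with ⟨e1, e2, e3, e4⟩ | ⟨e1, e2, e3, e4⟩ | ⟨e1, e2, e3, e4⟩ | ⟨e1, e2, e3, e4⟩
  · rw [iMap, if_pos e1, jMap, mkR_gt hp, mkR_lt (e1 ▸ hq)]
    rw [Prod.mk.injEq]
    exact ⟨rfl, Prod.ext e1.symm rfl⟩
  · rw [iMap, if_neg e1, if_pos e2, jMap, mkR_gt hp, mkR_gt (e2 ▸ hq)]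
    rw [Prod.mk.injEq]
    exact ⟨rfl, Prod.ext rfl e2.symm⟩
  · rw [iMap, if_neg e1, if_neg e2, if_pos e3, jMap, mkR_lt hp, mkR_lt (e3 ▸ hq)]
    rw [Prod.mk.injEq]
    exact ⟨rfl, Prod.ext e3.symm rfl⟩
  · rw [iMap, if_neg e1, if_neg e2, if_neg e3, jMap, mkR_lt hp, mkR_gt (e4 ▸ hq)]
    rw [Prod.mk.injEq]
    exact ⟨rfl, Prod.ext rfl e4.symm⟩

lemma right_inv {t : Fin n × Fin n × Fin n} (ht : t ∈ D n) :
    iMap n (jMap n t) = t := by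
  obtain ⟨x, y, z⟩ := t
  simp only [D, Finset.mem_filter, Finset.mem_univ, true_and] at ht
  obtain ⟨h1, h2, h3⟩ := ht
  rcases lt_or_gt_of_ne h1 with o1 | o1 <;> rcases lt_or_gt_of_ne h3 with o2 | o2
  · rw [jMap, mkR_lt o1, mkR_lt o2, iMap,
      if_neg (fun hc => h1 hc.symm), if_neg (fun hc => h2 hc.symm), if_pos rfl]
  · rw [jMap, mkR_lt o1, mkR_gt o2, iMap,
      if_neg (fun hc => h2 hc.symm), if_neg (fun hc => h1 hc.symm),
      if_neg (fun hc => h3 hc.symm)]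
  · rw [jMap, mkR_gt o1, mkR_lt o2, iMap, if_pos rfl]
  · rw [jMap, mkR_gt o1, mkR_gt o2, iMap, if_neg (fun hc => h3 hc.symm), if_pos rfl]

lemma term_eq {pq : (Fin n × Fin n) × (Fin n × Fin n)} (hmem : pq ∈ A n) :
    fTerm n pq = F n (iMap n pq) := by
  have htD : iMap n pq ∈ D n := iMap_mem hmem
  obtain ⟨hp, hq, hc⟩ := A_spec hmem
  have hd : dotR n (rootVecA n pq.1) (rootVecA n pq.2) ≠ 0 := by
    simp only [A, Finset.mem_filter] at hmem
    exact hmem.2.2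
  obtain ⟨p, q⟩ := pq
  rcases hc with ⟨e1, e2, e3, e4⟩ | ⟨e1, e2, e3, e4⟩ | ⟨e1, e2, e3, e4⟩ | ⟨e1, e2, e3, e4⟩
  · have hi : iMap n (p, q) = (p.2, p.1, q.2) := by rw [iMap, if_pos e1]
    rw [hi] at htD
    have hdv : dotR n (rootVecA n p) (rootVecA n q) = 1 := by
      rw [dot_formula, if_pos e1, if_neg e2, if_neg e3, if_neg e4]; norm_num
    have hsq := commSq htD (p := p) (q := q) (Equiv.swap_comm p.1 p.2) (by rw [e1])
    rw [fTerm, if_pos hd, hi, hdv, F, hsq, sgn,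
      if_neg (asymm hp), if_pos (e1 ▸ hq)]
    norm_num
  · have hi : iMap n (p, q) = (p.2, p.1, q.1) := by rw [iMap, if_neg e1, if_pos e2]
    rw [hi] at htD
    have hdv : dotR n (rootVecA n p) (rootVecA n q) = -1 := by
      rw [dot_formula, if_neg e1, if_pos e2, if_neg e3, if_neg e4]; norm_num
    have hsq := commSq htD (p := p) (q := q) (Equiv.swap_comm p.1 p.2)
      (by rw [Equiv.swap_comm, e2])
    rw [fTerm, if_pos hd, hi, hdv, F, hsq, sgn,
      if_neg (asymm hp), if_neg (asymm (e2 ▸ hq))]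
    norm_num
  · have hi : iMap n (p, q) = (p.1, p.2, q.2) := by rw [iMap, if_neg e1, if_neg e2, if_pos e3]
    rw [hi] at htD
    have hdv : dotR n (rootVecA n p) (rootVecA n q) = -1 := by
      rw [dot_formula, if_neg e1, if_neg e2, if_pos e3, if_neg e4]; norm_num
    have hsq := commSq htD (p := p) (q := q) rfl (by rw [e3])
    rw [fTerm, if_pos hd, hi, hdv, F, hsq, sgn,
      if_pos hp, if_pos (e3 ▸ hq)]
    norm_num
  · have hi : iMap n (p, q) = (p.1, p.2, q.1) := by
      rw [iMap, if_neg e1, if_neg e2, if_neg e3]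
    rw [hi] at htD
    have hdv : dotR n (rootVecA n p) (rootVecA n q) = 1 := by
      rw [dot_formula, if_neg e1, if_neg e2, if_neg e3, if_pos e4]; norm_num
    have hsq := commSq htD (p := p) (q := q) rfl (by rw [Equiv.swap_comm, e4])
    rw [fTerm, if_pos hd, hi, hdv, F, hsq, sgn,
      if_pos hp, if_neg (asymm (e4 ▸ hq))]
    norm_num

lemma step3 : ∑ pq ∈ A n, fTerm n pq = ∑ t ∈ D n, F n t :=
  Finset.sum_nbij' (iMap n) (jMap n) (fun _ h => iMap_mem h) (fun _ h => jMap_mem h)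
    (fun _ h => left_inv h) (fun _ h => right_inv h) (fun _ h => term_eq h)


lemma mem_T {σ : Equiv.Perm (Fin n)} (h : σ.IsThreeCycle) : σ ∈ T n := by
  simp [T, h]

lemma step2 : ∑ pq ∈ (posRootsA n ×ˢ posRootsA n), fTerm n pq = ∑ pq ∈ A n, fTerm n pq := by
  rw [A]
  symm
  apply Finset.sum_filter_of_ne
  intro pq hpq hne0
  refine ⟨?_, ?_⟩
  · intro hc
    apply hne0
    have hcz : commSn n pq.1 pq.2 = 0 := by rw [commSn, hc, sub_self]
    rw [fTerm, hcz]
    simp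
  · intro hc
    apply hne0
    rw [fTerm, if_neg (fun hcc => hcc hc)]

lemma step4 : ∑ t ∈ D n, F n t = ∑ σ ∈ T n, X n σ := by
  rw [← Finset.sum_fiberwise_of_maps_to (g := g n)
    (fun t ht => mem_T (g_isThreeCycle ht)) (F n)]
  apply Finset.sum_congr rfl
  intro σ hσ
  have h : σ.IsThreeCycle := by simpa [T] using hσ
  obtain ⟨x, hx⟩ := exists_moved h
  obtain ⟨d1, d2, d3, hfix⟩ := distinct3 h hx
  have hg1 : g n (x, σ x, σ (σ x)) = σ := g_eq h hx
  have hg2 : g n (σ x, σ (σ x), x) = σ := by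
    have := g_eq h d2
    rwa [hfix] at this
  have hg3 : g n (σ (σ x), x, σ x) = σ := by
    have hmoved : σ (σ (σ x)) ≠ σ (σ x) := by rw [hfix]; exact Ne.symm d3
    have := g_eq h hmoved
    rwa [hfix] at this
  rw [fiber_eq h hx]
  rw [Finset.sum_insert (by
      simp only [Finset.mem_insert, Finset.mem_singleton]
      push_neg
      exact ⟨fun hc => d1 (congrArg Prod.fst hc).symm,
        fun hc => d3 (congrArg Prod.fst hc).symm⟩),
    Finset.sum_insert (by
      simp only [Finset.mem_singleton]
      exact fun hc => d2 (congrArg Prod.fst hc).symm),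
    Finset.sum_singleton]
  rw [F, F, F, hg1, hg2, hg3, ← add_smul, ← add_smul, ← add_assoc]
  rw [sgn_sum (Ne.symm d1) (Ne.symm d3) (Ne.symm d2), one_smul]


lemma step5 : ∑ σ ∈ T n, X n σ
    = threeCycleSum n + threeCycleSum n
      - (T n).card • (2 : MonoidAlgebra ℂ (Equiv.Perm (Fin n))) := by
  have hinv : ∑ σ ∈ T n, MonoidAlgebra.single σ⁻¹ (1 : ℂ) = threeCycleSum n := by
    rw [threeCycleSum]
    apply Finset.sum_nbij' (fun σ => σ⁻¹) (fun σ => σ⁻¹)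
    · intro σ hσ
      have h : σ.IsThreeCycle := by simpa [T] using hσ
      simp [h.inv]
    · intro σ hσ
      have h : σ.IsThreeCycle := by simpa using hσ
      exact mem_T h.inv
    · intro σ _; simp
    · intro σ _; simp
    · intro σ _; rfl
  simp only [X]
  rw [Finset.sum_sub_distrib, Finset.sum_add_distrib, Finset.sum_const, hinv]
  rfl

end Bij

theorem statement15' {n : ℕ} (hn : 3 ≤ n) :
    OmegaSnPrime n = (1 / 8 : ℂ) •
      (threeCycleSum n - (((n : ℂ) * ((n : ℂ) - 1) * ((n : ℂ) - 2)) / 3) •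
        (1 : MonoidAlgebra ℂ (Equiv.Perm (Fin n)))) := by
  have hstep : OmegaSnPrime n = (1 / 16 : ℂ) • ∑ σ ∈ T n, X n σ := by
    rw [OmegaSnPrime]
    congr 1
    rw [← step4, ← step3, ← step2]
    rw [Finset.sum_product]
    rfl
  have hcast : ((3 * (T n).card : ℕ) : ℂ) = (((n * n - n) * (n - 2) : ℕ) : ℂ) := by
    exact_mod_cast congrArg (Nat.cast : ℕ → ℂ) card_T
  have h2n : 2 ≤ n := by omega
  have hnn : n ≤ n * n := Nat.le_mul_of_pos_left n (by omega)
  push_cast [Nat.cast_sub h2n, Nat.cast_sub hnn] at hcast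
  have hc : (((n : ℂ) * ((n : ℂ) - 1) * ((n : ℂ) - 2)) / 3) = ((T n).card : ℂ) := by
    field_simp
    linear_combination -hcast
  rw [hstep, step5, hc]
  rw [← Nat.cast_smul_eq_nsmul ℂ ((T n).card) (2 : MonoidAlgebra ℂ (Equiv.Perm (Fin n)))]
  have h2 : (2 : MonoidAlgebra ℂ (Equiv.Perm (Fin n))) = (2 : ℂ) • 1 := by
    rw [two_smul]
    norm_num
  rw [h2]
  module

end Stmt15Aux

/-- `Ω′_{S_n} = (1/8)(e_{(123)} − n(n−1)(n−2)/3)`. -/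
theorem statement15 (hn : 3 ≤ n) :
    OmegaSnPrime n = (1 / 8 : ℂ) •
      (threeCycleSum n - (((n : ℂ) * ((n : ℂ) - 1) * ((n : ℂ) - 2)) / 3) •
        (1 : MonoidAlgebra ℂ (Equiv.Perm (Fin n)))) := by
  exact Stmt15Aux.statement15' hn

end Statement15

end
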